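/- Let p, q > 1, p* = p/(p−1), q* = q/(q−1). Let F₁(s) = ∫₀ˢ (1 − t^q)^{−1/p} dt and F₂(s) = ∫₀ˢ (1 − t^{p*})^{−1/q*} dt for s ∈ [0,1], with π_{p,q} = 2F₁(1) and π_{q*,p*} = 2F₂(1). For every x ∈ [0,1], if s, σ ∈ [0,1] satisfy F₁(s) = (π_{p,q}/2)·x and F₂(σ) = (π_{q*,p*}/2)·(1 − x), then s = (1 − σ^{p*})^{1/q}. -/
import Mathlib

open MeasureTheory intervalIntegral Set Real Filter

/-- Integrability of the generalized-trig integrand on `[0,1]`. -/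
lemma gsd_intervalIntegrable {r e : ℝ} (hr : 1 ≤ r) (he0 : 0 < e) (he1 : e < 1) :
    IntervalIntegrable (fun t : ℝ => (1 - t ^ r) ^ (-e)) volume 0 1 := by
  have hmaj : IntervalIntegrable (fun t : ℝ => (1 - t) ^ (-e)) volume 0 1 := by
    have h := (intervalIntegral.intervalIntegrable_rpow' (a := 0) (b := 1)
      (r := -e) (by linarith)).comp_sub_left 1
    simpa using h.symm
  refine hmaj.mono_fun ?_ ?_
  · exact (by measurability : Measurable fun t : ℝ => (1 - t ^ r) ^ (-e)).aestronglyMeasurable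
  · filter_upwards [MeasureTheory.ae_restrict_mem measurableSet_uIoc] with t ht
    rw [Set.uIoc_of_le (zero_le_one : (0:ℝ) ≤ 1)] at ht
    obtain ⟨ht0, ht1⟩ := ht
    have htr : (0:ℝ) ≤ 1 - t ^ r := by
      have : t ^ r ≤ 1 := Real.rpow_le_one ht0.le ht1 (by linarith)
      linarith
    rw [Real.norm_eq_abs, abs_of_nonneg (Real.rpow_nonneg htr _),
      Real.norm_eq_abs, abs_of_nonneg (Real.rpow_nonneg (by linarith) _)]
    rcases eq_or_lt_of_le ht1 with h1 | h1
    · subst h1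
      simp [Real.one_rpow, Real.zero_rpow (neg_ne_zero.mpr he0.ne')]
    · have hle : t ^ r ≤ t := by
        have := Real.rpow_le_rpow_of_exponent_ge ht0 h1.le hr
        rwa [Real.rpow_one] at this
      exact Real.rpow_le_rpow_of_nonpos (by linarith) (by linarith) (by linarith)

/-- Strict monotonicity of the primitive on `[0,1]`. -/
lemma gsd_strictMonoOn {r e : ℝ} (hr : 1 ≤ r) (he0 : 0 < e) (he1 : e < 1) :
    StrictMonoOn (fun s : ℝ => ∫ t in (0:ℝ)..s, (1 - t ^ r) ^ (-e)) (Set.Icc 0 1) := by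
  have hI := gsd_intervalIntegrable hr he0 he1
  intro a ha b hb hab
  have hsub1 : Set.uIcc a (1:ℝ) ⊆ Set.uIcc (0:ℝ) 1 := by
    rw [Set.uIcc_of_le ha.2, Set.uIcc_of_le (zero_le_one : (0:ℝ) ≤ 1)]
    exact Set.Icc_subset_Icc ha.1 le_rfl
  have hIa : IntervalIntegrable (fun t : ℝ => (1 - t ^ r) ^ (-e)) volume 0 a := by
    apply hI.mono_set
    rw [Set.uIcc_of_le ha.1, Set.uIcc_of_le (zero_le_one : (0:ℝ) ≤ 1)]
    exact Set.Icc_subset_Icc le_rfl ha.2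
  have hIab : IntervalIntegrable (fun t : ℝ => (1 - t ^ r) ^ (-e)) volume a b := by
    apply hI.mono_set
    rw [Set.uIcc_of_le hab.le, Set.uIcc_of_le (zero_le_one : (0:ℝ) ≤ 1)]
    exact Set.Icc_subset_Icc ha.1 hb.2
  have hpos : 0 < ∫ t in a..b, (1 - t ^ r) ^ (-e) := by
    refine intervalIntegral.intervalIntegral_pos_of_pos_on hIab (fun t ht => ?_) hab
    have ht0 : 0 ≤ t := le_trans ha.1 ht.1.le
    have ht1 : t < 1 := lt_of_lt_of_le ht.2 hb.2
    have : t ^ r < 1 := Real.rpow_lt_one ht0 ht1 (by linarith)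
    exact Real.rpow_pos_of_pos (by linarith) _
  have hsum := intervalIntegral.integral_add_adjacent_intervals hIa hIab
  dsimp only
  linarith [hsum]

set_option maxHeartbeats 2000000 in
/-- Lemma 2 (second identity): sin_{p,q}((π_{p,q}/2)x) = cos_{q*,p*}^{q*-1}((π_{q*,p*}/2)(1-x)). -/
theorem generalized_sine_duality
    (p q pst qst : ℝ) (hp : 1 < p) (hq : 1 < q)
    (hpst : pst = p / (p - 1)) (hqst : qst = q / (q - 1))
    (F₁ F₂ : ℝ → ℝ)
    (hF₁ : ∀ s, F₁ s = ∫ t in (0:ℝ)..s, (1 - t ^ q) ^ (-(1/p)))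
    (hF₂ : ∀ s, F₂ s = ∫ t in (0:ℝ)..s, (1 - t ^ pst) ^ (-(1/qst)))
    (pipq piqstpst : ℝ) (hpi₁ : pipq = 2 * F₁ 1) (hpi₂ : piqstpst = 2 * F₂ 1)
    (x : ℝ) (hx : x ∈ Set.Icc (0:ℝ) 1)
    (s σ : ℝ) (hs : s ∈ Set.Icc (0:ℝ) 1) (hσ : σ ∈ Set.Icc (0:ℝ) 1)
    (hFs : F₁ s = pipq / 2 * x) (hFσ : F₂ σ = piqstpst / 2 * (1 - x)) :
    s = (1 - σ ^ pst) ^ (1/q) := by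
  -- basic facts about the exponents
  have hp0 : 0 < p := by linarith
  have hq0 : 0 < q := by linarith
  have hp1 : p - 1 > 0 := by linarith
  have hq1 : q - 1 > 0 := by linarith
  have hpst1 : 1 < pst := by
    rw [hpst]; rw [lt_div_iff₀ hp1]; linarith
  have hqst1 : 1 < qst := by
    rw [hqst]; rw [lt_div_iff₀ hq1]; linarith
  have hpst0 : 0 < pst := by linarith
  have hqst0 : 0 < qst := by linarith
  have hinvp : 0 < 1/p := by positivity
  have hinvp1 : 1/p < 1 := by rw [div_lt_one hp0]; linarith
  have hinvqst : 0 < 1/qst := by positivity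
  have hinvqst1 : 1/qst < 1 := by rw [div_lt_one hqst0]; linarith
  -- conjugate exponent identities
  have hconj : 1/pst = 1 - 1/p := by
    rw [hpst]; field_simp
  have hqqst : q / qst = q - 1 := by
    rw [hqst]; field_simp
  -- name the integrands
  set f₁ : ℝ → ℝ := fun t => (1 - t ^ q) ^ (-(1/p)) with hf₁def
  set f₂ : ℝ → ℝ := fun t => (1 - t ^ pst) ^ (-(1/qst)) with hf₂def
  have I₁ : IntervalIntegrable f₁ volume 0 1 := gsd_intervalIntegrable hq.le hinvp hinvp1
  have I₂ : IntervalIntegrable f₂ volume 0 1 := gsd_intervalIntegrable hpst1.le hinvqst hinvqst1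
  have hm₁ : Measurable f₁ := by measurability
  have hm₂ : Measurable f₂ := by measurability
  -- continuity of the primitives
  have hC₁ : ContinuousOn F₁ (Set.Icc 0 1) := by
    have := intervalIntegral.continuousOn_primitive_interval'
      (μ := volume) (b₁ := (0:ℝ)) (b₂ := 1) I₁ Set.left_mem_uIcc
    rw [Set.uIcc_of_le (zero_le_one : (0:ℝ) ≤ 1)] at this
    exact (this.congr fun y _ => (hF₁ y))
  have hC₂ : ContinuousOn F₂ (Set.Icc 0 1) := by
    have := intervalIntegral.continuousOn_primitive_interval'
      (μ := volume) (b₁ := (0:ℝ)) (b₂ := 1) I₂ Set.left_mem_uIcc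
    rw [Set.uIcc_of_le (zero_le_one : (0:ℝ) ≤ 1)] at this
    exact (this.congr fun y _ => (hF₂ y))
  -- the cosine-type substitution function
  set c : ℝ → ℝ := fun u => (1 - u ^ q) ^ (1/pst) with hcdef
  have hc_cont : Continuous c := by
    have h1 : Continuous fun u : ℝ => 1 - u ^ q := by
      apply continuous_const.sub
      exact continuous_iff_continuousAt.mpr fun u =>
        Real.continuousAt_rpow_const u q (Or.inr hq0.le)
    exact (continuous_iff_continuousAt.mpr fun v =>
      Real.continuousAt_rpow_const v (1/pst) (Or.inr (by positivity))).comp h1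
  have hc_maps : ∀ u ∈ Set.Icc (0:ℝ) 1, c u ∈ Set.Icc (0:ℝ) 1 := by
    intro u hu
    have h1 : u ^ q ≤ 1 := Real.rpow_le_one hu.1 hu.2 hq0.le
    constructor
    · exact Real.rpow_nonneg (by linarith) _
    · exact Real.rpow_le_one (by linarith) (by nlinarith [Real.rpow_nonneg hu.1 q]) (by positivity)
  -- the auxiliary function G
  set G : ℝ → ℝ := fun u => F₂ (c u) + (q/pst) * F₁ u with hGdef
  have hG_cont : ContinuousOn G (Set.Icc 0 1) := by
    apply ContinuousOn.add
    · exact hC₂.comp hc_cont.continuousOn hc_maps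
    · exact (hC₁.const_smul (q/pst))
  -- G has derivative zero on (0,1)
  have hG_deriv : ∀ u ∈ Set.Ioo (0:ℝ) 1, HasDerivAt G 0 u := by
    intro u hu
    obtain ⟨hu0, hu1⟩ := hu
    have huq0 : 0 < u ^ q := Real.rpow_pos_of_pos hu0 q
    have huq1 : u ^ q < 1 := Real.rpow_lt_one hu0.le hu1 hq0
    have h1q : 0 < 1 - u ^ q := by linarith
    have hcu0 : 0 < c u := Real.rpow_pos_of_pos h1q _
    have hcu1 : c u < 1 := Real.rpow_lt_one h1q.le (by linarith) (by positivity)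
    have hcupst : (c u) ^ pst = 1 - u ^ q := by
      rw [hcdef]
      rw [← Real.rpow_mul h1q.le, one_div_mul_cancel hpst0.ne', Real.rpow_one]
    -- derivative of F₁ at u
    have hd1 : HasDerivAt F₁ (f₁ u) u := by
      have hI : IntervalIntegrable f₁ volume 0 u := by
        apply I₁.mono_set
        rw [Set.uIcc_of_le hu0.le, Set.uIcc_of_le (zero_le_one : (0:ℝ) ≤ 1)]
        exact Set.Icc_subset_Icc le_rfl hu1.le
      have hmeas : StronglyMeasurableAtFilter f₁ (nhds u) volume :=
        ⟨Set.univ, Filter.univ_mem, hm₁.aestronglyMeasurable.restrict⟩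
      have hcont : ContinuousAt f₁ u := by
        have hinner : ContinuousAt (fun t : ℝ => 1 - t ^ q) u :=
          continuousAt_const.sub (Real.continuousAt_rpow_const u q (Or.inr hq0.le))
        exact hinner.rpow_const (Or.inl h1q.ne')
      have := intervalIntegral.integral_hasDerivAt_right hI hmeas hcont
      exact HasDerivAt.congr_of_eventuallyEq this
        (Filter.Eventually.of_forall fun y => (hF₁ y))
    -- derivative of F₂ at c u
    have hd2 : HasDerivAt F₂ (f₂ (c u)) (c u) := by
      have hI : IntervalIntegrable f₂ volume 0 (c u) := by
        apply I₂.mono_set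
        rw [Set.uIcc_of_le hcu0.le, Set.uIcc_of_le (zero_le_one : (0:ℝ) ≤ 1)]
        exact Set.Icc_subset_Icc le_rfl hcu1.le
      have hmeas : StronglyMeasurableAtFilter f₂ (nhds (c u)) volume :=
        ⟨Set.univ, Filter.univ_mem, hm₂.aestronglyMeasurable.restrict⟩
      have hcont : ContinuousAt f₂ (c u) := by
        have hpos : (0:ℝ) < 1 - (c u) ^ pst := by rw [hcupst]; linarith
        have hinner : ContinuousAt (fun t : ℝ => 1 - t ^ pst) (c u) :=
          continuousAt_const.sub (Real.continuousAt_rpow_const (c u) pst (Or.inr hpst0.le))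
        exact hinner.rpow_const (Or.inl hpos.ne')
      have := intervalIntegral.integral_hasDerivAt_right hI hmeas hcont
      exact HasDerivAt.congr_of_eventuallyEq this
        (Filter.Eventually.of_forall fun y => (hF₂ y))
    -- derivative of c at u
    have hdc : HasDerivAt c ((1/pst) * (1 - u ^ q) ^ (1/pst - 1) * (-(q * u ^ (q - 1)))) u := by
      have hinner : HasDerivAt (fun v : ℝ => 1 - v ^ q) (-(q * u ^ (q - 1))) u := by
        have := Real.hasDerivAt_rpow_const (x := u) (p := q) (Or.inl hu0.ne')
        simpa using (this.const_sub 1)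
      have houter : HasDerivAt (fun w : ℝ => w ^ (1/pst))
          ((1/pst) * (1 - u ^ q) ^ (1/pst - 1)) (1 - u ^ q) :=
        Real.hasDerivAt_rpow_const (Or.inl h1q.ne')
      exact houter.comp u hinner
    -- combine and show the derivative vanishes
    have hdG : HasDerivAt G
        (f₂ (c u) * ((1/pst) * (1 - u ^ q) ^ (1/pst - 1) * (-(q * u ^ (q - 1))))
          + (q/pst) * f₁ u) u := by
      exact ((hd2.comp u hdc)).add (hd1.const_mul (q/pst))
    have hzero : f₂ (c u) * ((1/pst) * (1 - u ^ q) ^ (1/pst - 1) * (-(q * u ^ (q - 1))))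
        + (q/pst) * f₁ u = 0 := by
      have hA : f₂ (c u) = u ^ (1 - q) := by
        show (1 - (c u) ^ pst) ^ (-(1/qst)) = u ^ (1 - q)
        rw [hcupst]
        have : (1:ℝ) - (1 - u ^ q) = u ^ q := by ring
        rw [this, ← Real.rpow_mul hu0.le]
        congr 1
        rw [mul_neg, mul_one_div, hqqst]
        ring
      have hB : u ^ (1 - q) * u ^ (q - 1) = 1 := by
        rw [← Real.rpow_add hu0]
        norm_num
      have hE : 1/pst - 1 = -(1/p) := by rw [hconj]; ring
      rw [hA, hE]
      show u ^ (1 - q) * (1/pst * (1 - u ^ q) ^ (-(1/p)) * -(q * u ^ (q - 1)))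
          + q/pst * (1 - u ^ q) ^ (-(1/p)) = 0
      linear_combination (-(q/pst) * (1 - u ^ q) ^ (-(1/p))) * hB
    exact hzero ▸ hdG
  -- G is constant on [0,1]
  have hG1 : ∀ a ∈ Set.Ioo (0:ℝ) 1, G 1 = G a := by
    intro a ha
    have h := constant_of_has_deriv_right_zero
      (f := G) (a := a) (b := 1)
      (hG_cont.mono (Set.Icc_subset_Icc ha.1.le le_rfl))
      (fun y hy => (hG_deriv y ⟨lt_of_lt_of_le ha.1 hy.1, hy.2⟩).hasDerivWithinAt)
    exact h 1 ⟨ha.2.le, le_rfl⟩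
  have hGconst : ∀ u ∈ Set.Icc (0:ℝ) 1, G u = G 1 := by
    intro u hu
    rcases eq_or_lt_of_le hu.1 with h0 | h0
    · -- u = 0 : limit argument
      have hne : (nhdsWithin (0:ℝ) (Set.Ioo 0 1)).NeBot := by
        apply mem_closure_iff_nhdsWithin_neBot.mp
        rw [closure_Ioo (by norm_num : (0:ℝ) ≠ 1)]
        exact ⟨le_rfl, zero_le_one⟩
      have t1 : Filter.Tendsto G (nhdsWithin 0 (Set.Ioo 0 1)) (nhds (G 0)) :=
        (hG_cont 0 ⟨le_rfl, zero_le_one⟩).mono Set.Ioo_subset_Icc_self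
      have t2 : Filter.Tendsto G (nhdsWithin 0 (Set.Ioo 0 1)) (nhds (G 1)) :=
        Filter.Tendsto.congr'
          (Filter.eventuallyEq_of_mem self_mem_nhdsWithin fun y hy => hG1 y hy)
          tendsto_const_nhds
      have h01 := tendsto_nhds_unique t1 t2
      rw [← h0]
      exact h01
    · rcases eq_or_lt_of_le hu.2 with h1 | h1
      · rw [h1]
      · exact (hG1 u ⟨h0, h1⟩).symm
  -- endpoint values
  have hc1 : c 1 = 0 := by
    have h : (1:ℝ)/pst ≠ 0 := ne_of_gt (by positivity)
    show ((1:ℝ) - (1:ℝ) ^ q) ^ (1/pst) = 0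
    rw [Real.one_rpow, sub_self, Real.zero_rpow h]
  have hc0 : c 0 = 1 := by
    show ((1:ℝ) - (0:ℝ) ^ q) ^ (1/pst) = 1
    rw [Real.zero_rpow hq0.ne', sub_zero, Real.one_rpow]
  have hF₁0 : F₁ 0 = 0 := by rw [hF₁]; simp
  have hF₂0 : F₂ 0 = 0 := by rw [hF₂]; simp
  have hG1val : G 1 = (q/pst) * F₁ 1 := by
    rw [hGdef]
    simp only [hc1, hF₂0]
    ring
  have hG0val : G 0 = F₂ 1 := by
    rw [hGdef]
    simp only [hc0, hF₁0]
    ring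
  have hscale : F₂ 1 = (q/pst) * F₁ 1 := by
    have h := hGconst 0 ⟨le_rfl, zero_le_one⟩
    rw [hG0val, hG1val] at h
    exact h
  -- the key identity : F₂ (c s) = F₂ σ
  have hGs := hGconst s hs
  rw [hG1val] at hGs
  have hFs' : F₁ s = F₁ 1 * x := by rw [hFs, hpi₁]; ring
  have hFσ' : F₂ σ = (q/pst) * F₁ 1 * (1 - x) := by
    rw [hFσ, hpi₂, hscale]; ring
  have hkey : F₂ σ = F₂ (c s) := by
    have : F₂ (c s) + (q/pst) * (F₁ 1 * x) = (q/pst) * F₁ 1 := by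
      rw [← hFs']; exact hGs
    rw [hFσ']
    linarith [this]
  -- injectivity of F₂ on [0,1]
  have hmono : StrictMonoOn F₂ (Set.Icc 0 1) := by
    intro a ha b hb hab
    rw [hF₂ a, hF₂ b]
    exact gsd_strictMonoOn hpst1.le hinvqst hinvqst1 ha hb hab
  have hσc : σ = c s := hmono.injOn hσ (hc_maps s hs) hkey
  -- conclude
  have hsq1 : s ^ q ≤ 1 := Real.rpow_le_one hs.1 hs.2 hq0.le
  have hσpst : σ ^ pst = 1 - s ^ q := by
    rw [hσc, hcdef]
    rw [← Real.rpow_mul (by linarith), one_div_mul_cancel hpst0.ne', Real.rpow_one]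
  rw [hσpst]
  have : (1:ℝ) - (1 - s ^ q) = s ^ q := by ring
  rw [this, ← Real.rpow_mul hs.1, mul_one_div_cancel hq0.ne', Real.rpow_one]
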